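/- In dimension 1, the elementary differential map on rooted trees factorises through multi-indices: for every n ≥ 1, every τ ∈ RT(n), and all f_1,…,f_n ∈ C^∞(ℝ,ℝ), one has F(τ)(f_1,…,f_n) = G(π(τ))(f_1,…,f_n). -/

import Mathlib

open Finset

/-- The type of smooth maps from `ℝ^d` to `ℝ^d` (i.e. `C_d = C^∞(ℝ^d, ℝ^d)`). -/
def SmoothMapD (d : ℕ) : Type :=
  {f : (Fin d → ℝ) → (Fin d → ℝ) // ∀ k : ℕ, ContDiff ℝ k f}

/-- A rooted tree on a finite vertex set `V`: a set `E` of (parent, child) edges together with a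
root, such that every non-root vertex has a unique parent, the root has no parent, and every
vertex reaches the root by iteratively passing to its parent. -/
structure RTree (V : Type) [Fintype V] [DecidableEq V] where
  E : Finset (V × V)
  root : V
  parent_unique : ∀ v : V, v ≠ root → ∃! u : V, (u, v) ∈ E
  root_no_parent : ∀ u : V, (u, root) ∉ E
  reaches_root : ∀ v : V, Relation.ReflTransGen (fun a b : V => (b, a) ∈ E) v root

/-- The children of a vertex `v` of a rooted tree: `C_v = {w | (v, w) ∈ E}`. -/
def RTree.children {V : Type} [Fintype V] [DecidableEq V] (τ : RTree V) (v : V) :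
    Finset V :=
  Finset.univ.filter (fun w => (v, w) ∈ τ.E)

/-- Partial derivative `∂_i` of a scalar function on `ℝ^d`. -/
noncomputable def pd {d : ℕ} (i : Fin d) (g : (Fin d → ℝ) → ℝ) : (Fin d → ℝ) → ℝ :=
  fun x => fderiv ℝ g x (Pi.single i 1)

/-- Iterated partial derivatives along a list of directions. -/
noncomputable def pdList {d : ℕ} (l : List (Fin d)) (g : (Fin d → ℝ) → ℝ) : (Fin d → ℝ) → ℝ :=
  l.foldr pd g

/-- The elementary differential of a rooted tree, in closed form: the `j`-th component of
`F(τ)((f^v)_v)(x)` is the sum over all choices of an index `idx v ∈ [d]` for each vertex `v`,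
subject to `idx root = j`, of the product over all vertices `v` of
`∂_{idx c₁} ⋯ ∂_{idx c_k} (f^v)_{idx v} (x)` where `c₁, …, c_k` are the children of `v`.
For smooth inputs this agrees with the usual recursive definition. -/
noncomputable def elemDiff {V : Type} [Fintype V] [DecidableEq V] {d : ℕ} (τ : RTree V)
    (f : V → ((Fin d → ℝ) → (Fin d → ℝ))) : (Fin d → ℝ) → (Fin d → ℝ) :=
  fun x j =>
    ∑ idx : V → Fin d,
      if idx τ.root = j then
        ∏ v : V, pdList ((τ.children v).toList.map idx) (fun y => f v y (idx v)) x
      else 0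

/-- The elementary differential `F(τ)` evaluated on smooth maps. -/
noncomputable def Fel (d : ℕ) {V : Type} [Fintype V] [DecidableEq V] (τ : RTree V)
    (f : V → SmoothMapD d) : (Fin d → ℝ) → (Fin d → ℝ) :=
  elemDiff τ (fun v => (f v).1)
/-- The type of smooth functions `ℝ → ℝ` (i.e. `C_1 = C^∞(ℝ, ℝ)`). -/
def SmoothR : Type := {f : ℝ → ℝ // ∀ k : ℕ, ContDiff ℝ k f}

/-- A multi-index on `[n]`: a map `φ : [n] → ℕ` with `∑ v, φ v = n - 1`. -/
structure MultiIndex (n : ℕ) where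
  φ : Fin n → ℕ
  sum_eq : ∑ v, φ v = n - 1

/-- The elementary differential `G(m)(f₁, …, fₙ) = f₁^{(φ 1)} ⋯ fₙ^{(φ n)}` of a multi-index. -/
noncomputable def Gmap {n : ℕ} (m : MultiIndex n) (f : Fin n → SmoothR) : ℝ → ℝ :=
  fun t => ∏ v, iteratedDeriv (m.φ v) ((f v).1) t
/-- The smooth function `ℝ → ℝ` induced by a smooth map `ℝ^1 → ℝ^1`. -/
noncomputable def toC1 (f : SmoothMapD 1) : SmoothR :=
  ⟨fun t => f.1 (fun _ => t) 0, fun k => by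
    have h1 : ContDiff ℝ (k : ℕ) (fun t : ℝ => (fun _ : Fin 1 => t)) :=
      contDiff_pi.mpr fun _ => contDiff_id
    exact (contDiff_pi.mp (f.2 k) 0).comp h1⟩

lemma pd_smooth {d : ℕ} (i : Fin d) {g : (Fin d → ℝ) → ℝ} (hg : ∀ k : ℕ, ContDiff ℝ k g) :
    ∀ k : ℕ, ContDiff ℝ k (pd i g) := by
  intro k
  have h1 : ContDiff ℝ (k : ℕ) (fderiv ℝ g) := by
    have := hg (k + 1)
    exact this.fderiv_right (by push_cast; exact le_refl _)
  exact h1.clm_apply contDiff_const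

lemma pdList_smooth {d : ℕ} (l : List (Fin d)) {g : (Fin d → ℝ) → ℝ}
    (hg : ∀ k : ℕ, ContDiff ℝ k g) : ∀ k : ℕ, ContDiff ℝ k (pdList l g) := by
  induction l with
  | nil => exact hg
  | cons i l ih => exact pd_smooth i ih

lemma pdList_eq_iteratedDeriv (l : List (Fin 1)) (g : (Fin 1 → ℝ) → ℝ)
    (hg : ∀ k : ℕ, ContDiff ℝ k g) (t : ℝ) :
    pdList l g (fun _ => t) = iteratedDeriv l.length (fun s => g (fun _ => s)) t := by
  induction l generalizing t with
  | nil => simp [pdList, iteratedDeriv_zero]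
  | cons i l ih =>
    have hcomp : (fun s => pdList l g (fun _ => s))
        = iteratedDeriv l.length (fun s => g (fun _ => s)) := funext fun s => ih s
    have hL : ∀ s : ℝ, HasDerivAt (fun u : ℝ => (fun _ : Fin 1 => u)) (fun _ : Fin 1 => (1:ℝ)) s := by
      intro s
      have := (ContinuousLinearMap.pi (fun _ : Fin 1 => ContinuousLinearMap.id ℝ ℝ)).hasDerivAt
        (x := s)
      exact this
    have hdiff : DifferentiableAt ℝ (pdList l g) (fun _ : Fin 1 => t) :=
      ((pdList_smooth l hg 1).differentiable (by simp)).differentiableAt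
    have hD : HasDerivAt (fun s => pdList l g (fun _ : Fin 1 => s))
        (fderiv ℝ (pdList l g) (fun _ => t) (fun _ => (1:ℝ))) t :=
      hdiff.hasFDerivAt.comp_hasDerivAt t (hL t)
    have hsingle : (Pi.single i (1:ℝ) : Fin 1 → ℝ) = fun _ => (1:ℝ) := by
      funext k
      rw [Subsingleton.elim k i, Pi.single_eq_same]
    calc pdList (i :: l) g (fun _ => t)
        = fderiv ℝ (pdList l g) (fun _ => t) (Pi.single i 1) := rfl
      _ = deriv (fun s => pdList l g (fun _ : Fin 1 => s)) t := by
          rw [hsingle, hD.deriv]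
      _ = iteratedDeriv (l.length + 1) (fun s => g (fun _ => s)) t := by
          rw [hcomp, ← iteratedDeriv_succ]
      _ = _ := rfl

/-- Proposition 2.5: in dimension `1`, the elementary differential factorises through
multi-indices: `F(τ) = G(π(τ))`, where `π(τ)` is the multi-index recording the number of
children of each vertex. -/
theorem elemDiff_factorises_through_multiindices (n : ℕ) (hn : 1 ≤ n)
    (τ : RTree (Fin n)) (m : MultiIndex n)
    (hm : ∀ v : Fin n, m.φ v = (τ.children v).card)
    (f : Fin n → SmoothMapD 1) (x : Fin 1 → ℝ) (j : Fin 1) :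
    Fel 1 τ f x j = Gmap m (fun v => toC1 (f v)) (x 0) := by
  have hx : x = fun _ => x 0 := funext fun k => by
    have : k = 0 := Subsingleton.elim _ _
    rw [this]
  unfold Fel elemDiff Gmap
  rw [Fintype.sum_unique]
  have hroot : (default : Fin n → Fin 1) τ.root = j := Subsingleton.elim _ _
  rw [if_pos hroot]
  apply Finset.prod_congr rfl
  intro v _
  have hg : ∀ k : ℕ, ContDiff ℝ k (fun y : Fin 1 → ℝ => (f v).1 y ((default : Fin n → Fin 1) v)) :=
    fun k => contDiff_pi.mp ((f v).2 k) _
  rw [hx, pdList_eq_iteratedDeriv _ _ hg]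
  have hlen : ((τ.children v).toList.map (default : Fin n → Fin 1)).length = m.φ v := by
    rw [List.length_map, Finset.length_toList, hm]
  rw [hlen]
  congr 1
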